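/- If F ⊆ ℝᴺ is a local Lipschitz one set (there exists continuous f : ℝᴺ → ℝ with 𝕃ip f = χ_F), then F is quasi-dense: for every x ∈ F and open neighborhood U of x, ℓ_N(F ∩ U) > 0. -/

import Mathlib

open scoped Classical
open Filter Metric Topology MeasureTheory Set ENNReal

/-- The local Lipschitz derivative. -/
noncomputable def LLip {X Y : Type*} [MetricSpace X] [MetricSpace Y] (f : X → Y) (x : X) : ℝ≥0∞ :=
  ⨅ (r : ℝ) (_ : 0 < r), ⨆ (u : X) (_ : u ∈ ball x r) (v : X) (_ : v ∈ ball x r) (_ : u ≠ v),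
    ENNReal.ofReal (dist (f u) (f v) / dist u v)

lemma llip_local {X Y : Type*} [MetricSpace X] [MetricSpace Y] (f : X → Y) (y : X) (K : ℝ)
    (hK : LLip f y < ENNReal.ofReal K) :
    ∃ r > 0, ∀ u ∈ ball y r, ∀ v ∈ ball y r, dist (f u) (f v) ≤ K * dist u v := by
  have hK0 : 0 < K := by
    by_contra hneg
    rw [ENNReal.ofReal_eq_zero.2 (le_of_not_gt hneg)] at hK
    exact (not_lt_of_ge zero_le) hK
  rw [LLip, iInf_lt_iff] at hK
  obtain ⟨r, hr⟩ := hK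
  rw [iInf_lt_iff] at hr
  obtain ⟨hr0, hr⟩ := hr
  refine ⟨r, hr0, fun u hu v hv => ?_⟩
  rcases eq_or_ne u v with rfl | hne
  · simp [mul_nonneg hK0.le dist_nonneg]
  have hle : ENNReal.ofReal (dist (f u) (f v) / dist u v) < ENNReal.ofReal K :=
    lt_of_le_of_lt (by
      apply le_iSup_of_le u; apply le_iSup_of_le hu; apply le_iSup_of_le v
      apply le_iSup_of_le hv; apply le_iSup_of_le hne; exact le_rfl) hr
  have h2 : dist (f u) (f v) / dist u v < K :=
    (ENNReal.ofReal_lt_ofReal_iff_of_nonneg (div_nonneg dist_nonneg dist_nonneg)).1 hle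
  have hd : 0 < dist u v := dist_pos.2 hne
  calc dist (f u) (f v) = dist (f u) (f v) / dist u v * dist u v := by field_simp
    _ ≤ K * dist u v := mul_le_mul_of_nonneg_right h2.le dist_nonneg

lemma llip_le {X Y : Type*} [MetricSpace X] [MetricSpace Y] (f : X → Y) (y : X) (K r : ℝ)
    (hr : 0 < r) (hK : 0 ≤ K)
    (H : ∀ u ∈ ball y r, ∀ v ∈ ball y r, dist (f u) (f v) ≤ K * dist u v) :
    LLip f y ≤ ENNReal.ofReal K := by
  refine le_trans (iInf_le _ r) (le_trans (iInf_le _ hr) ?_)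
  refine iSup_le fun u => iSup_le fun hu => iSup_le fun v => iSup_le fun hv => iSup_le fun hne => ?_
  refine ENNReal.ofReal_le_ofReal ?_
  rw [div_le_iff₀ (dist_pos.2 hne)]
  exact (H u hu v hv).trans (by rw [mul_comm])

lemma oneDim (h : ℝ → ℝ) (V : Set ℝ) (hV : IsOpen V) (C ε : ℝ) (hε : 0 ≤ ε) (hεC : ε ≤ C)
    (hyp : ∀ t ∈ Icc (0:ℝ) 1, ∃ δ > 0, ∀ p ∈ ball t δ, ∀ q ∈ ball t δ,
      |h p - h q| ≤ (if t ∈ V then C else ε) * |p - q|) :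
    |h 1 - h 0| ≤ ε + C * (volume (V ∩ Ioo (0:ℝ) 1)).toReal := by
  have hC : 0 ≤ C := hε.trans hεC
  set m : ℝ → ℝ := fun t => (volume (V ∩ Ioo (0:ℝ) t)).toReal with hm
  have hfin : ∀ t : ℝ, volume (V ∩ Ioo (0:ℝ) t) < ⊤ := fun t =>
    lt_of_le_of_lt (measure_mono inter_subset_right) (by simp)
  have hmono : ∀ {t t' : ℝ}, t ≤ t' → m t ≤ m t' := by
    intro t t' htt
    exact ENNReal.toReal_mono (hfin t').ne
      (measure_mono (inter_subset_inter_right _ (Ioo_subset_Ioo le_rfl htt)))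
  have hlip : ∀ {t t' : ℝ}, t ≤ t' → m t' ≤ m t + (t' - t) := by
    intro t t' htt
    have hsub : V ∩ Ioo (0:ℝ) t' ⊆ (V ∩ Ioo (0:ℝ) t) ∪ Ico t t' := by
      rintro z ⟨hzV, hz0, hzt⟩
      rcases lt_or_ge z t with hlt | hge
      · exact Or.inl ⟨hzV, hz0, hlt⟩
      · exact Or.inr ⟨hge, hzt⟩
    have : volume (V ∩ Ioo (0:ℝ) t') ≤ volume (V ∩ Ioo (0:ℝ) t) + ENNReal.ofReal (t' - t) := by
      refine (measure_mono hsub).trans ((measure_union_le _ _).trans ?_)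
      gcongr
      simp [Real.volume_Ico]
    refine (ENNReal.toReal_mono ?_ this).trans ?_
    · exact (ENNReal.add_lt_top.2 ⟨hfin t, ENNReal.ofReal_lt_top⟩).ne
    · rw [ENNReal.toReal_add (hfin t).ne ENNReal.ofReal_lt_top.ne,
        ENNReal.toReal_ofReal (by linarith)]
  have hmcont : Continuous m := by
    refine (LipschitzWith.of_dist_le_mul (K := 1) fun t t' => ?_).continuous
    rw [Real.dist_eq, Real.dist_eq, NNReal.coe_one, one_mul]
    rcases le_total t t' with hle | hle
    · rw [abs_sub_comm, abs_of_nonneg (by linarith [hmono hle]), abs_of_nonpos (by linarith)]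
      linarith [hlip hle]
    · rw [abs_of_nonneg (by linarith [hmono hle]), abs_of_nonneg (by linarith)]
      linarith [hlip hle]
  have hhcont : ∀ t ∈ Icc (0:ℝ) 1, ContinuousAt h t := by
    intro t ht
    obtain ⟨δ, hδ, H⟩ := hyp t ht
    set K := if t ∈ V then C else ε with hK
    have hK0 : 0 ≤ K := by rw [hK]; split <;> assumption
    rw [Metric.continuousAt_iff]
    intro ε' hε'
    refine ⟨min δ (ε' / (K + 1)), lt_min hδ (div_pos hε' (by linarith)), fun {p} hp => ?_⟩
    have hpδ : p ∈ ball t δ := by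
      rw [mem_ball, Real.dist_eq]; rw [Real.dist_eq] at hp
      exact lt_of_lt_of_le hp (min_le_left _ _)
    have h1 : |h p - h t| ≤ K * |p - t| := H p hpδ t (mem_ball_self hδ)
    rw [Real.dist_eq]
    calc |h p - h t| ≤ K * |p - t| := h1
      _ ≤ (K + 1) * |p - t| := by nlinarith [abs_nonneg (p - t)]
      _ < (K + 1) * (ε' / (K + 1)) := by
          have := lt_of_lt_of_le hp (min_le_right δ (ε' / (K + 1)))
          rw [Real.dist_eq] at this
          exact mul_lt_mul_of_pos_left this (by linarith)
      _ = ε' := by field_simp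
  set s : Set ℝ := {t : ℝ | |h t - h 0| ≤ ε * t + C * m t} with hs
  have hsub : Icc (0:ℝ) 1 ⊆ s := by
    refine IsClosed.Icc_subset_of_forall_exists_gt ?_ ?_ ?_
    · -- closedness
      have heq : s ∩ Icc (0:ℝ) 1 =
          Icc (0:ℝ) 1 ∩ (fun t => |h t - h 0| - (ε * t + C * m t)) ⁻¹' Iic (0:ℝ) := by
        ext t; simp only [hs, mem_inter_iff, mem_setOf_eq, mem_preimage, mem_Iic, sub_nonpos]
        exact and_comm
      rw [heq]
      have hcont : ContinuousOn (fun t => |h t - h 0| - (ε * t + C * m t)) (Icc (0:ℝ) 1) := by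
        apply ContinuousOn.sub
        · exact (ContinuousOn.sub (fun t ht => (hhcont t ht).continuousWithinAt)
            continuousOn_const).abs
        · exact (continuousOn_const.mul continuousOn_id).add
            (continuousOn_const.mul hmcont.continuousOn)
      exact hcont.preimage_isClosed_of_isClosed isClosed_Icc isClosed_Iic
    · rw [hs, mem_setOf_eq]
      simp only [sub_self, abs_zero, mul_zero, zero_add]
      exact mul_nonneg hC ENNReal.toReal_nonneg
    · rintro t ⟨hts, ht0, ht1⟩ y hy
      obtain ⟨δ, hδ, H⟩ := hyp t ⟨ht0, ht1.le⟩
      by_cases htV : t ∈ V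
      · obtain ⟨δ', hδ', hδ'V⟩ := Metric.isOpen_iff.mp hV t htV
        set η := min δ δ' with hη
        have hη0 : 0 < η := lt_min hδ hδ'
        set t' := min y (t + η / 2) with ht'
        have htt' : t < t' := lt_min hy (by linarith)
        have ht'le : t' ≤ t + η / 2 := min_le_right _ _
        refine ⟨t', ?_, htt', min_le_left _ _⟩
        have hb : t' ∈ ball t δ := by
          rw [mem_ball, Real.dist_eq, abs_of_pos (by linarith)]
          have : η / 2 < δ := by
            have := min_le_left δ δ'; linarith
          linarith
        have hstep : |h t' - h t| ≤ C * (t' - t) := by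
          have := H t' hb t (mem_ball_self hδ)
          rwa [if_pos htV, abs_of_pos (by linarith : (0:ℝ) < t' - t)] at this
        have hIooV : Ioo t t' ⊆ V := by
          intro z hz
          apply hδ'V
          rw [mem_ball, Real.dist_eq, abs_of_pos (by linarith [hz.1])]
          have : η / 2 < δ' := by have := min_le_right δ δ'; linarith
          linarith [hz.2, ht'le]
        have hmgain : m t + (t' - t) ≤ m t' := by
          have hdisj : Disjoint (V ∩ Ioo (0:ℝ) t) (Ioo t t') :=
            Set.disjoint_left.2 (by rintro z ⟨_, _, hzt⟩ ⟨hzt', _⟩; linarith)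
          have hsub2 : (V ∩ Ioo (0:ℝ) t) ∪ Ioo t t' ⊆ V ∩ Ioo (0:ℝ) t' := by
            rintro z (⟨h1, h2, h3⟩ | hz)
            · exact ⟨h1, h2, by linarith⟩
            · exact ⟨hIooV hz, by constructor <;> [linarith [hz.1]; exact hz.2]⟩
          have := measure_mono (μ := (volume : Measure ℝ)) hsub2
          rw [measure_union hdisj measurableSet_Ioo] at this
          have h2 := ENNReal.toReal_mono (hfin t').ne this
          rw [ENNReal.toReal_add (hfin t).ne (by simp : volume (Ioo t t') ≠ ⊤),
            Real.volume_Ioo, ENNReal.toReal_ofReal (by linarith)] at h2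
          linarith
        rw [hs, mem_setOf_eq] at hts ⊢
        have hCmul : C * (m t + (t' - t)) ≤ C * m t' := mul_le_mul_of_nonneg_left hmgain hC
        calc |h t' - h 0| ≤ |h t' - h t| + |h t - h 0| := abs_sub_le _ _ _
          _ ≤ C * (t' - t) + (ε * t + C * m t) := add_le_add hstep hts
          _ ≤ ε * t' + C * m t' := by nlinarith
      · set t' := min y (t + δ / 2) with ht'
        have htt' : t < t' := lt_min hy (by linarith)
        refine ⟨t', ?_, htt', min_le_left _ _⟩
        have hb : t' ∈ ball t δ := by
          rw [mem_ball, Real.dist_eq, abs_of_pos (by linarith)]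
          have := min_le_right y (t + δ / 2); linarith
        have hstep : |h t' - h t| ≤ ε * (t' - t) := by
          have := H t' hb t (mem_ball_self hδ)
          rwa [if_neg htV, abs_of_pos (by linarith : (0:ℝ) < t' - t)] at this
        rw [hs, mem_setOf_eq] at hts ⊢
        have hCmul : C * m t ≤ C * m t' := mul_le_mul_of_nonneg_left (hmono htt'.le) hC
        calc |h t' - h 0| ≤ |h t' - h t| + |h t - h 0| := abs_sub_le _ _ _
          _ ≤ ε * (t' - t) + (ε * t + C * m t) := add_le_add hstep hts
          _ ≤ ε * t' + C * m t' := by nlinarith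
  have h1 := hsub ⟨zero_le_one, le_refl 1⟩
  rw [hs, mem_setOf_eq] at h1
  simpa [hm] using h1

theorem qDense_of_localLipschitzOne (N : ℕ) (F : Set (EuclideanSpace ℝ (Fin N)))
    (f : EuclideanSpace ℝ (Fin N) → ℝ) (hc : Continuous f)
    (h : ∀ x, LLip f x = (if x ∈ F then 1 else 0)) :
    ∀ x ∈ F, ∀ U : Set (EuclideanSpace ℝ (Fin N)), IsOpen U → x ∈ U →
      0 < volume (F ∩ U) := by
  intro x hxF U hU hxU
  by_contra hvol
  have hvol0 : volume (F ∩ U) = 0 := by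
    rw [← nonpos_iff_eq_zero]; exact le_of_not_gt hvol
  obtain ⟨G, hFG, hGmeas, hG0⟩ := exists_measurable_superset_of_null hvol0
  obtain ⟨R, hR0, hRU⟩ := Metric.isOpen_iff.mp hU x hxU
  set r0 := R / 4 with hr0def
  have hr0 : 0 < r0 := by positivity
  have hLLip1 : ∀ y : EuclideanSpace ℝ (Fin N), LLip f y ≤ 1 := by
    intro y; rw [h y]; split <;> simp
  -- geometric lemma : segment points stay in U
  have hgeom : ∀ u ∈ ball x r0, ∀ v ∈ ball x r0, ∀ w : EuclideanSpace ℝ (Fin N), ‖w‖ < r0 → ∀ t ∈ Icc (0:ℝ) 1,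
      u + w + t • (v - u) ∈ U := by
    intro u hu v hv w hw t ht
    apply hRU
    rw [mem_ball, dist_eq_norm] at hu hv ⊢
    have heq : u + w + t • (v - u) - x = (1 - t) • (u - x) + t • (v - x) + w := by module
    rw [heq]
    have h1 : ‖(1 - t) • (u - x) + t • (v - x) + w‖ ≤
        ‖(1 - t) • (u - x)‖ + ‖t • (v - x)‖ + ‖w‖ := norm_add₃_le
    rw [norm_smul, norm_smul, Real.norm_eq_abs, Real.norm_eq_abs,
      abs_of_nonneg (by linarith [ht.2] : (0:ℝ) ≤ 1 - t), abs_of_nonneg ht.1] at h1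
    have h2 : (1 - t) * ‖u - x‖ ≤ (1 - t) * r0 :=
      mul_le_mul_of_nonneg_left hu.le (by linarith [ht.2])
    have h3 : t * ‖v - x‖ ≤ t * r0 := mul_le_mul_of_nonneg_left hv.le ht.1
    have : (1 - t) * r0 + t * r0 = r0 := by ring
    rw [hr0def] at *
    linarith
  -- key claim
  have key : ∀ ε' : ℝ, 0 < ε' → ∀ u ∈ ball x r0, ∀ v ∈ ball x r0,
      dist (f u) (f v) ≤ ε' * dist u v := by
    intro ε' hε' u hu v hv
    rcases eq_or_ne v u with rfl | hne
    · simp [mul_nonneg hε'.le dist_nonneg]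
    set d := v - u with hd
    have hdn : 0 < ‖d‖ := by rw [hd, norm_pos_iff]; exact sub_ne_zero.2 hne
    refine le_of_forall_pos_le_add ?_
    intro η hη
    -- continuity at u and v
    have hcu : Tendsto (fun w : EuclideanSpace ℝ (Fin N) => f (u + w)) (𝓝 0) (𝓝 (f u)) := by
      refine (hc.tendsto u).comp ?_
      exact (continuous_add_left u).tendsto' _ _ (by simp)
    have hcv : Tendsto (fun w : EuclideanSpace ℝ (Fin N) => f (v + w)) (𝓝 0) (𝓝 (f v)) := by
      refine (hc.tendsto v).comp ?_
      exact (continuous_add_left v).tendsto' _ _ (by simp)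
    obtain ⟨δu, hδu, hu'⟩ := Metric.eventually_nhds_iff_ball.1
      (Metric.tendsto_nhds.1 hcu (η/3) (by positivity))
    obtain ⟨δv, hδv, hv'⟩ := Metric.eventually_nhds_iff_ball.1
      (Metric.tendsto_nhds.1 hcv (η/3) (by positivity))
    set δ := min (min δu δv) r0 with hδdef
    have hδ : 0 < δ := lt_min (lt_min hδu hδv) hr0
    -- Fubini : a.e. w the segment meets G in a null set
    set A : Set (EuclideanSpace ℝ (Fin N) × ℝ) := (Prod.snd ⁻¹' Icc (0:ℝ) 1) ∩
      ((fun p : EuclideanSpace ℝ (Fin N) × ℝ => u + p.1 + p.2 • d) ⁻¹' G) with hAdef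
    have hφ : Continuous (fun p : EuclideanSpace ℝ (Fin N) × ℝ => u + p.1 + p.2 • d) := by fun_prop
    have hA : MeasurableSet A :=
      (measurable_snd measurableSet_Icc).inter (hφ.measurable hGmeas)
    have hA0 : (volume.prod volume) A = 0 := by
      rw [Measure.prod_apply_symm hA]
      have hz : ∀ t : ℝ, volume ((fun w : EuclideanSpace ℝ (Fin N) => (w, t)) ⁻¹' A) = 0 := by
        intro t
        have hsub : (fun w : EuclideanSpace ℝ (Fin N) => (w, t)) ⁻¹' A ⊆ (fun w : EuclideanSpace ℝ (Fin N) => w + (u + t • d)) ⁻¹' G := by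
          intro w hw
          have := hw.2
          simpa [add_comm, add_assoc, add_left_comm] using this
        refine le_antisymm (le_trans (measure_mono hsub) ?_) zero_le
        rw [measure_preimage_add_right volume _ G, hG0]
      simp [hz]
    have hae : ∀ᵐ w : EuclideanSpace ℝ (Fin N) ∂volume, volume (Prod.mk w ⁻¹' A) = 0 := by
      filter_upwards [(Measure.measure_prod_null hA).1 hA0] with w hw using hw
    obtain ⟨w, hwball, hwnull⟩ : ∃ w : EuclideanSpace ℝ (Fin N), w ∈ ball (0:EuclideanSpace ℝ (Fin N)) δ ∧ volume (Prod.mk w ⁻¹' A) = 0 := by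
      by_contra hcon
      push_neg at hcon
      have hsub : ball (0:EuclideanSpace ℝ (Fin N)) δ ⊆ {w : EuclideanSpace ℝ (Fin N) | ¬ volume (Prod.mk w ⁻¹' A) = 0} :=
        fun w hw => hcon w hw
      have h1 := measure_mono (μ := (volume : Measure (EuclideanSpace ℝ (Fin N)))) hsub
      rw [ae_iff] at hae
      rw [hae] at h1
      exact absurd h1 (not_le.2 (measure_ball_pos volume 0 hδ))
    have hwn : ‖w‖ < δ := by rwa [mem_ball, dist_zero_right] at hwball
    -- choose the open set V
    set ε₂ := (η/3) / ((1 + ε') * ‖d‖ + 1) with hε₂def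
    have hε₂ : 0 < ε₂ := by positivity
    obtain ⟨V, hVsub, hVopen, hVvol⟩ := Set.exists_isOpen_lt_of_lt (Prod.mk w ⁻¹' A)
      (ENNReal.ofReal ε₂) (by rw [hwnull]; exact ENNReal.ofReal_pos.2 hε₂)
    -- apply oneDim
    have hwr0 : ‖w‖ < r0 := lt_of_lt_of_le hwn (min_le_right _ _)
    have hyp : ∀ t ∈ Icc (0:ℝ) 1, ∃ δ' > 0, ∀ p ∈ ball t δ', ∀ q ∈ ball t δ',
        |f (u + w + p • d) - f (u + w + q • d)| ≤
          (if t ∈ V then (1 + ε') * ‖d‖ else ε' * ‖d‖) * |p - q| := by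
      intro t ht
      by_cases htV : t ∈ V
      · rw [if_pos htV]
        have hlt : LLip f (u + w + t • d) < ENNReal.ofReal (1 + ε') :=
          lt_of_le_of_lt (hLLip1 _) (by
            rw [show ((1:ℝ≥0∞)) = ENNReal.ofReal 1 by simp]
            exact ENNReal.ofReal_lt_ofReal_iff (by linarith) |>.2 (by linarith))
        obtain ⟨r, hr, Hr⟩ := llip_local f _ _ hlt
        refine ⟨r / ‖d‖, by positivity, fun p hp q hq => ?_⟩
        have hmem : ∀ s : ℝ, s ∈ ball t (r / ‖d‖) → u + w + s • d ∈ ball (u + w + t • d) r := by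
          intro s hs
          rw [mem_ball, dist_eq_norm, show u + w + s • d - (u + w + t • d) = (s - t) • d by module,
            norm_smul, Real.norm_eq_abs]
          rw [mem_ball, Real.dist_eq] at hs
          calc |s - t| * ‖d‖ < (r / ‖d‖) * ‖d‖ := by
                exact mul_lt_mul_of_pos_right hs hdn
            _ = r := by field_simp
        have := Hr _ (hmem p hp) _ (hmem q hq)
        have hPQ : dist (u + w + p • d) (u + w + q • d) = |p - q| * ‖d‖ := by
          rw [dist_eq_norm, show u + w + p • d - (u + w + q • d) = (p - q) • d by module,
            norm_smul, Real.norm_eq_abs]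
        rw [hPQ, Real.dist_eq] at this
        calc |f (u + w + p • d) - f (u + w + q • d)| ≤ (1 + ε') * (|p - q| * ‖d‖) := this
          _ = (1 + ε') * ‖d‖ * |p - q| := by ring
      · rw [if_neg htV]
        have hnG : u + w + t • d ∉ G := by
          intro hmem
          exact htV (hVsub ⟨ht, hmem⟩)
        have hnF : u + w + t • d ∉ F := by
          intro hmemF
          exact hnG (hFG ⟨hmemF, hgeom u hu v hv w hwr0 t ht⟩)
        have hlt : LLip f (u + w + t • d) < ENNReal.ofReal ε' := by
          rw [h _, if_neg hnF]
          exact ENNReal.ofReal_pos.2 hε'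
        obtain ⟨r, hr, Hr⟩ := llip_local f _ _ hlt
        refine ⟨r / ‖d‖, by positivity, fun p hp q hq => ?_⟩
        have hmem : ∀ s : ℝ, s ∈ ball t (r / ‖d‖) → u + w + s • d ∈ ball (u + w + t • d) r := by
          intro s hs
          rw [mem_ball, dist_eq_norm, show u + w + s • d - (u + w + t • d) = (s - t) • d by module,
            norm_smul, Real.norm_eq_abs]
          rw [mem_ball, Real.dist_eq] at hs
          calc |s - t| * ‖d‖ < (r / ‖d‖) * ‖d‖ := by
                exact mul_lt_mul_of_pos_right hs hdn
            _ = r := by field_simp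
        have := Hr _ (hmem p hp) _ (hmem q hq)
        have hPQ : dist (u + w + p • d) (u + w + q • d) = |p - q| * ‖d‖ := by
          rw [dist_eq_norm, show u + w + p • d - (u + w + q • d) = (p - q) • d by module,
            norm_smul, Real.norm_eq_abs]
        rw [hPQ, Real.dist_eq] at this
        calc |f (u + w + p • d) - f (u + w + q • d)| ≤ ε' * (|p - q| * ‖d‖) := this
          _ = ε' * ‖d‖ * |p - q| := by ring
    have main := oneDim (fun t => f (u + w + t • d)) V hVopen ((1 + ε') * ‖d‖) (ε' * ‖d‖)
      (by positivity) (by nlinarith) hyp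
    -- simplify endpoints
    have he1 : u + w + (1:ℝ) • d = v + w := by rw [hd]; module
    have he0 : u + w + (0:ℝ) • d = u + w := by module
    rw [he1, he0] at main
    -- bound the volume term
    have hVfin : volume (V ∩ Ioo (0:ℝ) 1) ≤ ENNReal.ofReal ε₂ :=
      le_trans (measure_mono inter_subset_left) hVvol.le
    have hVreal : (volume (V ∩ Ioo (0:ℝ) 1)).toReal ≤ ε₂ := by
      refine le_trans (ENNReal.toReal_mono (by simp) hVfin) ?_
      rw [ENNReal.toReal_ofReal hε₂.le]
    have hterm : (1 + ε') * ‖d‖ * (volume (V ∩ Ioo (0:ℝ) 1)).toReal ≤ η / 3 := by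
      have h1 : (1 + ε') * ‖d‖ * (volume (V ∩ Ioo (0:ℝ) 1)).toReal ≤ (1 + ε') * ‖d‖ * ε₂ := by
        apply mul_le_mul_of_nonneg_left hVreal (by positivity)
      refine h1.trans ?_
      rw [hε₂def]
      have ha : 0 < (1 + ε') * ‖d‖ := by positivity
      have heq2 : (1 + ε') * ‖d‖ * (η / 3 / ((1 + ε') * ‖d‖ + 1)) =
          η / 3 * ((1 + ε') * ‖d‖ / ((1 + ε') * ‖d‖ + 1)) := by ring
      rw [heq2]
      have hle1 : (1 + ε') * ‖d‖ / ((1 + ε') * ‖d‖ + 1) ≤ 1 :=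
        (div_le_one (by linarith)).2 (by linarith)
      exact mul_le_of_le_one_right (by positivity) hle1
    -- continuity bounds
    have hbu : dist (f (u + w)) (f u) < η / 3 := by
      apply hu'
      rw [mem_ball, dist_zero_right]
      exact lt_of_lt_of_le hwn (le_trans (min_le_left _ _) (min_le_left _ _))
    have hbv : dist (f (v + w)) (f v) < η / 3 := by
      apply hv'
      rw [mem_ball, dist_zero_right]
      exact lt_of_lt_of_le hwn (le_trans (min_le_left _ _) (min_le_right _ _))
    have hmid : dist (f (u + w)) (f (v + w)) ≤ ε' * ‖d‖ + η / 3 := by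
      rw [Real.dist_eq, abs_sub_comm]
      linarith [main, hterm]
    have hdd : dist u v = ‖d‖ := by rw [dist_eq_norm, hd, norm_sub_rev]
    calc dist (f u) (f v) ≤ dist (f u) (f (u + w)) + dist (f (u + w)) (f (v + w))
          + dist (f (v + w)) (f v) := dist_triangle4 _ _ _ _
      _ ≤ η / 3 + (ε' * ‖d‖ + η / 3) + η / 3 := by
          rw [dist_comm (f u)]
          exact add_le_add (add_le_add hbu.le hmid) hbv.le
      _ ≤ ε' * dist u v + η := by rw [hdd]; linarith
  -- conclude
  have h1 : LLip f x = 1 := by rw [h x, if_pos hxF]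
  have h2 : LLip f x ≤ ENNReal.ofReal (1/2) :=
    llip_le f x (1/2) r0 hr0 (by norm_num) (key (1/2) (by norm_num))
  rw [h1] at h2
  have : ENNReal.ofReal (1/2) < 1 := ENNReal.ofReal_lt_one.2 (by norm_num)
  exact absurd h2 (not_le.2 this)
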